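/- Let γ : (0,∞) → ℝ² be the curve γ(t) = (t cos(e^{1/t}), t sin(e^{1/t})), let cross(u,w) = u₁w₂ − u₂w₁, let Q(t) = cross(γ′(t), γ′′(t))/‖γ′(t)‖³, and for p ≠ 0 let M̂_p u = (⟨Jp,u⟩ p + ⟨p,u⟩ Jp)/‖p‖² with Jp = (−y,x) for p=(x,y). Then there exists a function k : ℝ → ℝ which is infinitely differentiable with k(t) = 0 for all t ≤ 0, such that for every t ∈ (0,1]: Q′(t) = k(t) · cross(γ′(t), M̂_{γ(t)} γ′(t)) / ‖γ′(t)‖. -/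

import Mathlib

/-- The spiral `γ(t) = (t cos(e^{1/t}), t sin(e^{1/t}))`. -/
noncomputable def spiral : ℝ → ℝ × ℝ :=
  fun t => (t * Real.cos (Real.exp (1 / t)), t * Real.sin (Real.exp (1 / t)))

/-- The planar cross product `cross(u, w) = u₁w₂ - u₂w₁`. -/
def planarCross (u w : ℝ × ℝ) : ℝ := u.1 * w.2 - u.2 * w.1

/-- The Euclidean norm on `ℝ²`. -/
noncomputable def euclNorm (u : ℝ × ℝ) : ℝ := Real.sqrt (u.1 ^ 2 + u.2 ^ 2)

/-- The Euclidean inner product on `ℝ²`. -/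
def euclDot (u w : ℝ × ℝ) : ℝ := u.1 * w.1 + u.2 * w.2

/-- Rotation by `π/2`: `J(x, y) = (-y, x)`. -/
def rotJ (p : ℝ × ℝ) : ℝ × ℝ := (-p.2, p.1)

/-- The endomorphism `M̂_p u = (⟨Jp, u⟩ p + ⟨p, u⟩ Jp)/‖p‖²` associated to the symmetric
tensor `M = 2r dr dφ`. -/
noncomputable def Mhat (p u : ℝ × ℝ) : ℝ × ℝ :=
  (1 / (euclNorm p) ^ 2) • (euclDot (rotJ p) u • p + euclDot p u • rotJ p)

/-- The signed curvature density `Q(t) = cross(γ'(t), γ''(t)) / ‖γ'(t)‖³`. -/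
noncomputable def spiralQ (t : ℝ) : ℝ :=
  planarCross (deriv spiral t) (deriv (deriv spiral) t) / (euclNorm (deriv spiral t)) ^ 3

open Real

/-- first derivative components -/
noncomputable def sp1 (t : ℝ) : ℝ :=
  Real.cos (Real.exp (1/t)) + (Real.exp (1/t) / t) * Real.sin (Real.exp (1/t))
noncomputable def sp2 (t : ℝ) : ℝ :=
  Real.sin (Real.exp (1/t)) - (Real.exp (1/t) / t) * Real.cos (Real.exp (1/t))


lemma hasDerivAt_exp_one_div {t : ℝ} (ht : t ≠ 0) :
    HasDerivAt (fun s : ℝ => Real.exp (1/s)) (-(Real.exp (1/t) / t^2)) t := by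
  have h1 : HasDerivAt (fun s : ℝ => 1/s) (-(1/t^2)) t := by
    simpa [one_div] using hasDerivAt_inv ht
  simpa [div_eq_mul_inv, mul_comm] using h1.exp

lemma hasDerivAt_spiral {t : ℝ} (ht : t ≠ 0) :
    HasDerivAt spiral (sp1 t, sp2 t) t := by
  have hu := hasDerivAt_exp_one_div ht
  have hc : HasDerivAt (fun s : ℝ => s * Real.cos (Real.exp (1/s))) (sp1 t) t := by
    have := (hasDerivAt_id t).mul hu.cos
    refine this.congr_deriv ?_
    unfold sp1
    field_simp
    simp only [id]; ring
  have hs : HasDerivAt (fun s : ℝ => s * Real.sin (Real.exp (1/s))) (sp2 t) t := by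
    have := (hasDerivAt_id t).mul hu.sin
    refine this.congr_deriv ?_
    unfold sp2
    field_simp
    simp only [id]; ring
  exact hc.prodMk hs

/-- second derivative components -/
noncomputable def sq1 (t : ℝ) : ℝ :=
  -(Real.exp (1/t) / t^3) * (Real.sin (Real.exp (1/t)) + Real.exp (1/t) * Real.cos (Real.exp (1/t)))
noncomputable def sq2 (t : ℝ) : ℝ :=
  (Real.exp (1/t) / t^3) * (Real.cos (Real.exp (1/t)) - Real.exp (1/t) * Real.sin (Real.exp (1/t)))

lemma hasDerivAt_sp1 {t : ℝ} (ht : t ≠ 0) : HasDerivAt sp1 (sq1 t) t := by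
  have hu := hasDerivAt_exp_one_div ht
  have hq : HasDerivAt (fun s : ℝ => Real.exp (1/s) / s)
      ((-(Real.exp (1/t) / t^2) * t - Real.exp (1/t) * 1) / t^2) t :=
    hu.div (hasDerivAt_id t) ht
  have := hu.cos.add (hq.mul hu.sin)
  refine this.congr_deriv ?_
  unfold sq1
  field_simp
  ring

lemma hasDerivAt_sp2 {t : ℝ} (ht : t ≠ 0) : HasDerivAt sp2 (sq2 t) t := by
  have hu := hasDerivAt_exp_one_div ht
  have hq : HasDerivAt (fun s : ℝ => Real.exp (1/s) / s)
      ((-(Real.exp (1/t) / t^2) * t - Real.exp (1/t) * 1) / t^2) t :=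
    hu.div (hasDerivAt_id t) ht
  have := hu.sin.sub (hq.mul hu.cos)
  refine this.congr_deriv ?_
  unfold sq2
  field_simp
  ring


lemma deriv_spiral_eq {t : ℝ} (ht : t ≠ 0) : deriv spiral t = (sp1 t, sp2 t) :=
  (hasDerivAt_spiral ht).deriv

lemma deriv2_spiral_eq {t : ℝ} (ht : t ≠ 0) : deriv (deriv spiral) t = (sq1 t, sq2 t) := by
  have hev : deriv spiral =ᶠ[nhds t] fun s => (sp1 s, sp2 s) := by
    filter_upwards [isOpen_compl_singleton.mem_nhds ht] with s hs
    exact deriv_spiral_eq hs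
  rw [hev.deriv_eq]
  exact ((hasDerivAt_sp1 ht).prodMk (hasDerivAt_sp2 ht)).deriv

lemma cross_sp_sq {t : ℝ} (ht : t ≠ 0) :
    planarCross (sp1 t, sp2 t) (sq1 t, sq2 t) =
      Real.exp (1/t) * (t - Real.exp (1/t)^2) / t^4 := by
  have h := Real.sin_sq_add_cos_sq (Real.exp (1/t))
  calc planarCross (sp1 t, sp2 t) (sq1 t, sq2 t)
      = Real.exp (1/t) * (t - Real.exp (1/t)^2) / t^4 *
        (Real.sin (Real.exp (1/t))^2 + Real.cos (Real.exp (1/t))^2) := by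
        unfold planarCross sp1 sp2 sq1 sq2
        rw [one_div] at h ⊢
        field_simp
        simp only [one_div]
        linear_combination (0:ℝ) * h
    _ = _ := by rw [h, mul_one]

lemma norm_sp {t : ℝ} (ht : 0 < t) :
    euclNorm (sp1 t, sp2 t) = Real.sqrt (t^2 + Real.exp (1/t)^2) / t := by
  have h := Real.sin_sq_add_cos_sq (Real.exp (1/t))
  have e : sp1 t ^ 2 + sp2 t ^ 2 = (t^2 + Real.exp (1/t)^2) / t^2 := by
    calc sp1 t ^ 2 + sp2 t ^ 2
        = (t^2 + Real.exp (1/t)^2) / t^2 *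
          (Real.sin (Real.exp (1/t))^2 + Real.cos (Real.exp (1/t))^2) := by
          unfold sp1 sp2
          rw [one_div] at h ⊢
          field_simp
          simp only [one_div]
          linear_combination (0:ℝ) * h
      _ = _ := by rw [h, mul_one]
  unfold euclNorm
  rw [e, Real.sqrt_div (by positivity) (t^2), Real.sqrt_sq ht.le]


noncomputable def Qex (t : ℝ) : ℝ :=
  Real.exp (1/t) * (t - Real.exp (1/t)^2) / (t * Real.sqrt (t^2 + Real.exp (1/t)^2)^3)

lemma sqrtS_pos {t : ℝ} (ht : 0 < t) : 0 < Real.sqrt (t^2 + Real.exp (1/t)^2) :=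
  Real.sqrt_pos.2 (by positivity)

lemma spiralQ_eq {t : ℝ} (ht : 0 < t) : spiralQ t = Qex t := by
  unfold spiralQ Qex
  rw [deriv_spiral_eq ht.ne', deriv2_spiral_eq ht.ne', cross_sp_sq ht.ne', norm_sp ht]
  have h1 := (sqrtS_pos ht).ne'
  field_simp

lemma hasDerivAt_Qex {t : ℝ} (ht : 0 < t) :
    HasDerivAt Qex
      (((Real.exp (1/t) - Real.exp (1/t)/t + 3*Real.exp (1/t)^3/t^2) * t * (t^2 + Real.exp (1/t)^2)
        - Real.exp (1/t) * (t - Real.exp (1/t)^2) *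
            (4*t^2 + Real.exp (1/t)^2 - 3*Real.exp (1/t)^2/t))
        / (t^2 * Real.sqrt (t^2 + Real.exp (1/t)^2)^5)) t := by
  have hu := hasDerivAt_exp_one_div ht.ne'
  have hS : HasDerivAt (fun s : ℝ => s^2 + Real.exp (1/s)^2)
      (2*t + 2 * Real.exp (1/t) ^ 1 * (-(Real.exp (1/t) / t^2))) t := by
    exact ((hasDerivAt_pow 2 t).add (hu.pow 2)).congr_deriv (by norm_num)
  have hSpos : (0:ℝ) < t^2 + Real.exp (1/t)^2 := by positivity
  have hsq := hS.sqrt hSpos.ne'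
  have hden := (hasDerivAt_id t).mul (hsq.pow 3)
  have hnum := hu.mul ((hasDerivAt_id t).sub (hu.pow 2))
  have hw := sqrtS_pos ht
  have h0 : t * Real.sqrt (t^2 + Real.exp (1/t)^2)^3 ≠ 0 := by positivity
  have h := hnum.div hden h0
  have hQ : Qex = fun s => Real.exp (1/s) * (s - Real.exp (1/s)^2) /
      (s * Real.sqrt (s^2 + Real.exp (1/s)^2)^3) := rfl
  rw [hQ]
  refine h.congr_deriv ?_
  have hsq2 : Real.sqrt (t^2 + Real.exp (1/t)^2) ^ 2 = t^2 + Real.exp (1/t)^2 :=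
    Real.sq_sqrt hSpos.le
  simp only [Pi.mul_apply, Pi.sub_apply, Pi.pow_apply, id]
  set W := Real.sqrt (t^2 + Real.exp (1/t)^2) with hW
  field_simp
  ring_nf
  rw [show W^4 = (W^2)^2 by ring, hsq2]
  ring_nf


lemma norm_spiral {t : ℝ} (ht : 0 < t) : euclNorm (spiral t) = t := by
  have h := Real.sin_sq_add_cos_sq (Real.exp (1/t))
  have e : (spiral t).1 ^ 2 + (spiral t).2 ^ 2 = t^2 := by
    show (t * Real.cos (Real.exp (1/t)))^2 + (t * Real.sin (Real.exp (1/t)))^2 = t^2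
    linear_combination t^2 * h
  unfold euclNorm
  rw [e, Real.sqrt_sq ht.le]

lemma cross_Mhat {t : ℝ} (ht : 0 < t) :
    planarCross (deriv spiral t) (Mhat (spiral t) (deriv spiral t)) =
      1 - Real.exp (1/t)^2 / t^2 := by
  have h := Real.sin_sq_add_cos_sq (Real.exp (1/t))
  rw [deriv_spiral_eq ht.ne']
  unfold Mhat
  rw [norm_spiral ht]
  unfold planarCross euclDot rotJ spiral sp1 sp2
  simp only [Prod.smul_fst, Prod.smul_snd, Prod.fst_add, Prod.snd_add, smul_eq_mul]
  field_simp
  simp only [one_div]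
  have h' : Real.sin (Real.exp t⁻¹)^2 + Real.cos (Real.exp t⁻¹)^2 = 1 :=
    Real.sin_sq_add_cos_sq _
  linear_combination ((t^2 - Real.exp t⁻¹^2) *
    (Real.sin (Real.exp t⁻¹)^2 + Real.cos (Real.exp t⁻¹)^2 + 1)) * h'


/-- the cutoff factor -/
noncomputable def wcut (t : ℝ) : ℝ := t * expNegInvGlue t * Real.smoothTransition (3 - 2*t)

noncomputable def kfun (t : ℝ) : ℝ :=
  (t⁻¹ * expNegInvGlue t) *
    (1 + (4*t^2+3*t+2) * expNegInvGlue t ^ 2 - (3*t^3+t^2) * expNegInvGlue t ^ 4) /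
  ((wcut t ^ 2 + 1)^2 * (wcut t ^ 2 - 1))

lemma expNegInvGlue_pos_eq {t : ℝ} (ht : 0 < t) : expNegInvGlue t = Real.exp (-t⁻¹) := by
  simp [expNegInvGlue, not_le.2 ht]

lemma wcut_sq_lt_one (t : ℝ) : wcut t ^ 2 < 1 := by
  rcases le_or_gt t 0 with h | h
  · simp [wcut, expNegInvGlue.zero_of_nonpos h]
  rcases le_or_gt (3/2 : ℝ) t with h2 | h2
  · have : Real.smoothTransition (3 - 2*t) = 0 :=
      Real.smoothTransition.zero_of_nonpos (by linarith)
    simp [wcut, this]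
  · have hG : expNegInvGlue t < Real.exp (-(2/3)) := by
      rw [expNegInvGlue_pos_eq h]
      apply Real.exp_lt_exp.2
      have : (2:ℝ)/3 < t⁻¹ := by
        rw [lt_inv_comm₀ (by norm_num) h]  -- may need fix
        linarith
      linarith
    have hexp : Real.exp (-(2/3)) * (3/2) < 1 := by
      rw [Real.exp_neg]
      rw [inv_mul_lt_iff₀ (Real.exp_pos _), mul_one]
      have := Real.add_one_lt_exp (x := (2/3:ℝ)) (by norm_num)
      linarith
    have hGpos : 0 < expNegInvGlue t := expNegInvGlue.pos_of_pos h
    have hc0 : 0 ≤ Real.smoothTransition (3 - 2*t) := Real.smoothTransition.nonneg _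
    have hc1 : Real.smoothTransition (3 - 2*t) ≤ 1 := Real.smoothTransition.le_one _
    have hw0 : 0 ≤ wcut t := by
      unfold wcut; positivity
    have hw1 : wcut t < 1 := by
      unfold wcut
      calc t * expNegInvGlue t * Real.smoothTransition (3 - 2*t)
          ≤ t * expNegInvGlue t * 1 := by
            apply mul_le_mul_of_nonneg_left hc1 (by positivity)
        _ < 1 := by
            rw [mul_one]
            calc t * expNegInvGlue t ≤ (3/2) * expNegInvGlue t := by
                  apply mul_le_mul_of_nonneg_right h2.le hGpos.le
              _ < (3/2) * Real.exp (-(2/3)) := by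
                  apply mul_lt_mul_of_pos_left hG (by norm_num)
              _ < 1 := by linarith [hexp]
    nlinarith [hw0, hw1]

lemma kfun_den_ne (t : ℝ) : (wcut t ^ 2 + 1)^2 * (wcut t ^ 2 - 1) ≠ 0 := by
  have h1 := wcut_sq_lt_one t
  have h2 : (0:ℝ) ≤ wcut t ^ 2 := sq_nonneg _
  have : wcut t ^ 2 - 1 < 0 := by linarith
  have : (wcut t ^ 2 + 1)^2 > 0 := by positivity
  intro h
  rcases mul_eq_zero.1 h with h' | h' <;> nlinarith

lemma kfun_contDiff : ContDiff ℝ (⊤ : ℕ∞) kfun := by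
  have hA : ContDiff ℝ (⊤ : ℕ∞) (fun t : ℝ => t⁻¹ * expNegInvGlue t) := by
    have := expNegInvGlue.contDiff_polynomial_eval_inv_mul (n := (⊤:ℕ∞)) (Polynomial.X (R := ℝ))
    simpa using this
  have hG : ContDiff ℝ (⊤ : ℕ∞) expNegInvGlue := expNegInvGlue.contDiff
  have hc : ContDiff ℝ (⊤ : ℕ∞) (fun t : ℝ => Real.smoothTransition (3 - 2*t)) :=
    Real.smoothTransition.contDiff.comp (contDiff_const.sub (contDiff_const.mul contDiff_id))
  have hw : ContDiff ℝ (⊤ : ℕ∞) wcut :=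
    ((contDiff_id.mul hG).mul hc)
  apply ContDiff.div
  · exact hA.mul (by fun_prop)
  · fun_prop
  · exact kfun_den_ne

lemma kfun_nonpos {t : ℝ} (ht : t ≤ 0) : kfun t = 0 := by
  unfold kfun
  rw [expNegInvGlue.zero_of_nonpos ht]
  simp

/-- There is a function `k`, smooth on `ℝ` and vanishing identically on `(-∞, 0]`, such that
for every `t ∈ (0, 1]`:
`Q'(t) = k(t) · cross(γ'(t), M̂_{γ(t)} γ'(t)) / ‖γ'(t)‖`. -/
theorem stmt_11 :
    ∃ k : ℝ → ℝ, ContDiff ℝ (⊤ : ℕ∞) k ∧ (∀ t ≤ (0 : ℝ), k t = 0) ∧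
      ∀ t ∈ Set.Ioc (0 : ℝ) 1,
        deriv spiralQ t =
          k t * planarCross (deriv spiral t) (Mhat (spiral t) (deriv spiral t)) /
            euclNorm (deriv spiral t) := by
  refine ⟨kfun, kfun_contDiff, fun t ht => kfun_nonpos ht, ?_⟩
  rintro t ⟨ht0, ht1⟩
  have hQd : deriv spiralQ t =
      ((Real.exp (1/t) - Real.exp (1/t)/t + 3*Real.exp (1/t)^3/t^2) * t * (t^2 + Real.exp (1/t)^2)
        - Real.exp (1/t) * (t - Real.exp (1/t)^2) *
            (4*t^2 + Real.exp (1/t)^2 - 3*Real.exp (1/t)^2/t))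
        / (t^2 * Real.sqrt (t^2 + Real.exp (1/t)^2)^5) := by
    have hev : spiralQ =ᶠ[nhds t] Qex := by
      filter_upwards [isOpen_Ioi.mem_nhds ht0] with s hs
      exact spiralQ_eq hs
    rw [hev.deriv_eq]
    exact (hasDerivAt_Qex ht0).deriv
  rw [hQd, cross_Mhat ht0, deriv_spiral_eq ht0.ne', norm_sp ht0]
  have hv : expNegInvGlue t = Real.exp (-t⁻¹) := expNegInvGlue_pos_eq ht0
  have hcut : Real.smoothTransition (3 - 2*t) = 1 :=
    Real.smoothTransition.one_of_one_le (by linarith)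
  unfold kfun wcut
  rw [hv, hcut, mul_one]
  have huv : Real.exp (1/t) * Real.exp (-t⁻¹) = 1 := by
    rw [← Real.exp_add]
    simp [one_div]
  have hw2 : Real.sqrt (t^2 + Real.exp (1/t)^2) ^ 2 = t^2 + Real.exp (1/t)^2 :=
    Real.sq_sqrt (by positivity)
  have hwpos := sqrtS_pos ht0
  have hv1 : Real.exp (-t⁻¹) < 1 := by
    rw [Real.exp_lt_one_iff]
    have : 0 < t⁻¹ := inv_pos.2 ht0
    linarith
  have hvpos : (0:ℝ) < Real.exp (-t⁻¹) := Real.exp_pos _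
  have hd1 : (t * Real.exp (-t⁻¹))^2 + 1 ≠ 0 := by positivity
  have htv0 : 0 < t * Real.exp (-t⁻¹) := by positivity
  have htv1 : t * Real.exp (-t⁻¹) < 1 := by nlinarith [mul_le_mul_of_nonneg_right ht1 hvpos.le]
  have hd2 : (t * Real.exp (-t⁻¹))^2 - 1 ≠ 0 := by nlinarith
  set U := Real.exp (1/t) with hU
  set V := Real.exp (-t⁻¹) with hV
  set W := Real.sqrt (t^2 + U^2) with hW
  have hVU : V = U⁻¹ := by
    show Real.exp (-t⁻¹) = (Real.exp (1/t))⁻¹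
    rw [one_div, Real.exp_neg]
  have hU0 : U ≠ 0 := by positivity
  have hd3 : t^2 - U^2 ≠ 0 := by
    have htU : t < U := by
      have := mul_lt_mul_of_pos_right htv1 (show (0:ℝ) < U by positivity)
      rw [mul_assoc, mul_comm V U, huv] at this
      linarith
    nlinarith
  rw [hVU] at hd1 hd2 ⊢
  field_simp
  rw [show W^4 = (t^2+U^2)^2 by rw [← hw2]; ring]
  ring
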